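/- Let φ be a CNF formula, and let x be a variable of φ occurring negatively in exactly the clauses N₁, …, N_n and positively in exactly the clauses P₁, …, P_m, with n, m ≥ 1 and no clause of φ containing both x and ¬x. Let φ′ be the CNF formula obtained from φ by: introducing fresh variables x₁, …, x_{n+m} and y₁, …, y_{n+m−1}; adding, for each 1 ≤ i ≤ n + m − 1, the clauses (x_i ∨ y_i) and (¬y_i ∨ ¬x_{i+1}); replacing the occurrence of ¬x in N_k by ¬x_k for each 1 ≤ k ≤ n; and replacing the occurrence of x in P_j by x_{n+j} for each 1 ≤ j ≤ m. Then φ′ is satisfiable if and only if φ is satisfiable. -/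

import Mathlib

/-- A literal: a variable (indexed by ℕ) or its negation (`pos = false`). -/
structure VLit where
  var : ℕ
  pos : Bool
deriving DecidableEq

/-- A clause is a finite disjunction of literals. -/
abbrev VClause := List VLit

/-- A CNF formula is a finite conjunction of clauses. -/
abbrev VCNF := List VClause

/-- The value of a literal under an assignment. -/
def VLit.eval (w : ℕ → Bool) (l : VLit) : Bool :=
  if l.pos then w l.var else !(w l.var)

/-- An assignment satisfies a clause if some literal of it is true. -/
def VClause.sat (w : ℕ → Bool) (c : VClause) : Prop :=
  ∃ l ∈ c, l.eval w = true

/-- An assignment satisfies a CNF formula if it satisfies every clause. -/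
def VCNF.sat (w : ℕ → Bool) (φ : VCNF) : Prop :=
  ∀ c ∈ φ, c.sat w

/-- A CNF formula is satisfiable if some assignment satisfies it. -/
def VCNF.Satisfiable (φ : VCNF) : Prop :=
  ∃ w : ℕ → Bool, φ.sat w

/-- The set of variables occurring in a CNF formula. -/
def VCNF.vars (φ : VCNF) : Set ℕ :=
  {v | ∃ c ∈ φ, ∃ l ∈ c, l.var = v}

lemma vlit_eval_pos (w : ℕ → Bool) (v : ℕ) : VLit.eval w ⟨v, true⟩ = w v := rfl

lemma vlit_eval_neg (w : ℕ → Bool) (v : ℕ) : VLit.eval w ⟨v, false⟩ = !(w v) := rfl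

lemma vlit_eval_congr (w w' : ℕ → Bool) (l : VLit) (h : w l.var = w' l.var) :
    l.eval w = l.eval w' := by simp [VLit.eval, h]

lemma vlit_cases (l : VLit) (x : ℕ) (h : l.var = x) :
    l = ⟨x, true⟩ ∨ l = ⟨x, false⟩ := by
  cases l with | mk v p => cases p <;> simp_all

set_option maxHeartbeats 1000000 in
/-- Let `φ = O ++ Ns ++ Ps` be a CNF formula in which the variable `x`
occurs negatively in exactly the clauses `Ns = N₁, …, N_n` and positively in exactly the
clauses `Ps = P₁, …, P_m` (`n, m ≥ 1`, no clause containing both `x` and `¬x`). Let `φ'`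
be obtained from `φ` by introducing fresh pairwise-distinct variables
`x₁, …, x_{n+m}` (via `xv`) and `y₁, …, y_{n+m−1}` (via `yv`); adding the clauses
`(x_i ∨ y_i)` and `(¬y_i ∨ ¬x_{i+1})` for `1 ≤ i ≤ n+m−1`; replacing the occurrence of
`¬x` in `N_k` by `¬x_k` for `1 ≤ k ≤ n`; and replacing the occurrence of `x` in `P_j` by
`x_{n+j}` for `1 ≤ j ≤ m`. Then `φ'` is satisfiable iff `φ` is satisfiable. -/
theorem variable_split_equisatisfiable (x : ℕ) (O Ns Ps : VCNF) (n m : ℕ)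
    (hn : Ns.length = n) (hm : Ps.length = m) (hn1 : 1 ≤ n) (hm1 : 1 ≤ m)
    (hO : ∀ c ∈ O, ∀ l ∈ c, l.var ≠ x)
    (hNs : ∀ c ∈ Ns, (⟨x, false⟩ : VLit) ∈ c ∧ (⟨x, true⟩ : VLit) ∉ c)
    (hPs : ∀ c ∈ Ps, (⟨x, true⟩ : VLit) ∈ c ∧ (⟨x, false⟩ : VLit) ∉ c)
    (xv yv : ℕ → ℕ)
    (hxfresh : ∀ i, 1 ≤ i → i ≤ n + m → xv i ∉ VCNF.vars (O ++ Ns ++ Ps))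
    (hyfresh : ∀ i, 1 ≤ i → i ≤ n + m - 1 → yv i ∉ VCNF.vars (O ++ Ns ++ Ps))
    (hxinj : ∀ i j, 1 ≤ i → i ≤ n + m → 1 ≤ j → j ≤ n + m → xv i = xv j → i = j)
    (hyinj : ∀ i j, 1 ≤ i → i ≤ n + m - 1 → 1 ≤ j → j ≤ n + m - 1 → yv i = yv j → i = j)
    (hxy : ∀ i j, 1 ≤ i → i ≤ n + m → 1 ≤ j → j ≤ n + m - 1 → xv i ≠ yv j) :
    VCNF.Satisfiable
      (O
        ++ ((Ns.zipIdx.map Prod.swap).map (fun kc =>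
              kc.2.map (fun l =>
                if l = (⟨x, false⟩ : VLit) then (⟨xv (kc.1 + 1), false⟩ : VLit) else l)))
        ++ ((Ps.zipIdx.map Prod.swap).map (fun jc =>
              jc.2.map (fun l =>
                if l = (⟨x, true⟩ : VLit) then (⟨xv (n + jc.1 + 1), true⟩ : VLit) else l)))
        ++ ((List.range (n + m - 1)).map
              (fun i => [(⟨xv (i + 1), true⟩ : VLit), ⟨yv (i + 1), true⟩]))
        ++ ((List.range (n + m - 1)).map
              (fun i => [(⟨yv (i + 1), false⟩ : VLit), ⟨xv (i + 2), false⟩])))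
      ↔ VCNF.Satisfiable (O ++ Ns ++ Ps) := by
  constructor
  · -- forward: φ' sat → φ sat
    rintro ⟨w', hw'⟩
    -- membership of chain clauses
    have hc1 : ∀ i, i < n + m - 1 →
        VClause.sat w' [(⟨xv (i + 1), true⟩ : VLit), ⟨yv (i + 1), true⟩] := by
      intro i hi
      apply hw'
      simp only [List.mem_append, List.mem_map, List.mem_range]
      exact Or.inl (Or.inr ⟨i, hi, rfl⟩)
    have hc2 : ∀ i, i < n + m - 1 →
        VClause.sat w' [(⟨yv (i + 1), false⟩ : VLit), ⟨xv (i + 2), false⟩] := by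
      intro i hi
      apply hw'
      simp only [List.mem_append, List.mem_map, List.mem_range]
      exact Or.inr ⟨i, hi, rfl⟩
    -- one-step chain
    have step : ∀ i, i < n + m - 1 → w' (xv (i + 1)) = false → w' (xv (i + 2)) = false := by
      intro i hi hx
      have h1 := hc1 i hi
      have hy : w' (yv (i + 1)) = true := by
        obtain ⟨l, hl, hev⟩ := h1
        simp only [List.mem_cons, List.not_mem_nil, or_false] at hl
        rcases hl with rfl | rfl
        · simp [VLit.eval, hx] at hev
        · simpa [VLit.eval] using hev
      obtain ⟨l, hl, hev⟩ := hc2 i hi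
      simp only [List.mem_cons, List.not_mem_nil, or_false] at hl
      rcases hl with rfl | rfl
      · simp [VLit.eval, hy] at hev
      · simpa [VLit.eval] using hev
    -- chain propagation
    have chain : ∀ d i, 1 ≤ i → i + d ≤ n + m → w' (xv i) = false → w' (xv (i + d)) = false := by
      intro d
      induction d with
      | zero => intro i _ _ h; simpa using h
      | succ d ih =>
        intro i hi1 hid hx
        have h1 : w' (xv (i + d)) = false := ih i hi1 (by omega) hx
        have h2 := step (i + d - 1) (by omega) (by
          have : i + d - 1 + 1 = i + d := by omega
          rw [this]; exact h1)
        have : i + d - 1 + 2 = i + (d + 1) := by omega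
        rwa [this] at h2
    by_cases hb : ∀ k, 1 ≤ k → k ≤ n → w' (xv k) = true
    · -- all negative-chain vars true: set x := true
      refine ⟨fun v => if v = x then true else w' v, ?_⟩
      intro c hc
      simp only [List.mem_append] at hc
      rcases hc with (hc | hc) | hc
      · -- c ∈ O
        have hc' : c.sat w' := hw' c (by simp [hc])
        obtain ⟨l, hl, hev⟩ := hc'
        refine ⟨l, hl, ?_⟩
        rw [vlit_eval_congr _ w' l (by simp [hO c hc l hl])]
        exact hev
      · -- c ∈ Ns
        obtain ⟨k, hk, rfl⟩ := List.mem_iff_getElem.mp hc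
        have henum : (k, Ns[k]) ∈ Ns.zipIdx.map Prod.swap :=
          List.mem_map.mpr ⟨(Ns[k], k), List.mk_mem_zipIdx_iff_getElem?.mpr (List.getElem?_eq_getElem hk), rfl⟩
        have hmem : (Ns[k].map (fun l =>
            if l = (⟨x, false⟩ : VLit) then (⟨xv (k + 1), false⟩ : VLit) else l)) ∈
            (O ++ ((Ns.zipIdx.map Prod.swap).map (fun kc =>
              kc.2.map (fun l =>
                if l = (⟨x, false⟩ : VLit) then (⟨xv (kc.1 + 1), false⟩ : VLit) else l)))
            ++ ((Ps.zipIdx.map Prod.swap).map (fun jc =>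
              jc.2.map (fun l =>
                if l = (⟨x, true⟩ : VLit) then (⟨xv (n + jc.1 + 1), true⟩ : VLit) else l)))
            ++ ((List.range (n + m - 1)).map
                  (fun i => [(⟨xv (i + 1), true⟩ : VLit), ⟨yv (i + 1), true⟩]))
            ++ ((List.range (n + m - 1)).map
                  (fun i => [(⟨yv (i + 1), false⟩ : VLit), ⟨xv (i + 2), false⟩]))) := by
          simp only [List.mem_append, List.mem_map]
          exact Or.inl (Or.inl (Or.inl (Or.inr ⟨(k, Ns[k]), List.mem_map.mp henum, rfl⟩)))
        obtain ⟨l', hl', hev⟩ := hw' _ hmem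
        obtain ⟨l, hl, rfl⟩ := List.mem_map.mp hl'
        by_cases hlx : l = (⟨x, false⟩ : VLit)
        · exfalso
          rw [if_pos hlx] at hev
          have := hb (k + 1) (by omega) (by omega)
          simp [VLit.eval, this] at hev
        · rw [if_neg hlx] at hev
          refine ⟨l, hl, ?_⟩
          have hlx2 : l ≠ (⟨x, true⟩ : VLit) := fun h => (hNs _ hc).2 (h ▸ hl)
          have hvar : l.var ≠ x := by
            intro h
            rcases vlit_cases l x h with h' | h'
            · exact hlx2 h'
            · exact hlx h'
          rw [vlit_eval_congr _ w' l (by simp [hvar])]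
          exact hev
      · -- c ∈ Ps: x true satisfies it
        refine ⟨⟨x, true⟩, (hPs c hc).1, ?_⟩
        simp [VLit.eval]
    · -- some chain var false: set x := false
      push_neg at hb
      obtain ⟨k, hk1, hkn, hkf⟩ := hb
      replace hkf : w' (xv k) = false := by revert hkf; cases w' (xv k) <;> simp
      have hall : ∀ j, n + 1 ≤ j → j ≤ n + m → w' (xv j) = false := by
        intro j hj1 hj2
        have := chain (j - k) k hk1 (by omega) hkf
        have hkj : k + (j - k) = j := by omega
        rwa [hkj] at this
      refine ⟨fun v => if v = x then false else w' v, ?_⟩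
      intro c hc
      simp only [List.mem_append] at hc
      rcases hc with (hc | hc) | hc
      · have hc' : c.sat w' := hw' c (by simp [hc])
        obtain ⟨l, hl, hev⟩ := hc'
        refine ⟨l, hl, ?_⟩
        rw [vlit_eval_congr _ w' l (by simp [hO c hc l hl])]
        exact hev
      · -- c ∈ Ns: ¬x satisfies it
        refine ⟨⟨x, false⟩, (hNs c hc).1, ?_⟩
        simp [VLit.eval]
      · -- c ∈ Ps
        obtain ⟨j, hj, rfl⟩ := List.mem_iff_getElem.mp hc
        have henum : (j, Ps[j]) ∈ Ps.zipIdx.map Prod.swap :=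
          List.mem_map.mpr ⟨(Ps[j], j), List.mk_mem_zipIdx_iff_getElem?.mpr (List.getElem?_eq_getElem hj), rfl⟩
        have hmem : (Ps[j].map (fun l =>
            if l = (⟨x, true⟩ : VLit) then (⟨xv (n + j + 1), true⟩ : VLit) else l)) ∈
            (O ++ ((Ns.zipIdx.map Prod.swap).map (fun kc =>
              kc.2.map (fun l =>
                if l = (⟨x, false⟩ : VLit) then (⟨xv (kc.1 + 1), false⟩ : VLit) else l)))
            ++ ((Ps.zipIdx.map Prod.swap).map (fun jc =>
              jc.2.map (fun l =>
                if l = (⟨x, true⟩ : VLit) then (⟨xv (n + jc.1 + 1), true⟩ : VLit) else l)))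
            ++ ((List.range (n + m - 1)).map
                  (fun i => [(⟨xv (i + 1), true⟩ : VLit), ⟨yv (i + 1), true⟩]))
            ++ ((List.range (n + m - 1)).map
                  (fun i => [(⟨yv (i + 1), false⟩ : VLit), ⟨xv (i + 2), false⟩]))) := by
          simp only [List.mem_append, List.mem_map]
          exact Or.inl (Or.inl (Or.inr ⟨(j, Ps[j]), List.mem_map.mp henum, rfl⟩))
        obtain ⟨l', hl', hev⟩ := hw' _ hmem
        obtain ⟨l, hl, rfl⟩ := List.mem_map.mp hl'
        by_cases hlx : l = (⟨x, true⟩ : VLit)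
        · exfalso
          rw [if_pos hlx] at hev
          have := hall (n + j + 1) (by omega) (by omega)
          simp [VLit.eval, this] at hev
        · rw [if_neg hlx] at hev
          refine ⟨l, hl, ?_⟩
          have hlx2 : l ≠ (⟨x, false⟩ : VLit) := fun h => (hPs _ hc).2 (h ▸ hl)
          have hvar : l.var ≠ x := by
            intro h
            rcases vlit_cases l x h with h' | h'
            · exact hlx h'
            · exact hlx2 h'
          rw [vlit_eval_congr _ w' l (by simp [hvar])]
          exact hev
  · -- backward: φ sat → φ' sat
    rintro ⟨w, hw⟩
    classical
    set w' : ℕ → Bool := fun v =>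
      if ∃ i, 1 ≤ i ∧ i ≤ n + m ∧ xv i = v then w x
      else if ∃ i, 1 ≤ i ∧ i ≤ n + m - 1 ∧ yv i = v then !(w x) else w v with hw'def
    have hagree : ∀ v ∈ VCNF.vars (O ++ Ns ++ Ps), w' v = w v := by
      intro v hv
      simp only [hw'def]
      rw [if_neg, if_neg]
      · rintro ⟨i, hi1, hi2, rfl⟩; exact hyfresh i hi1 hi2 hv
      · rintro ⟨i, hi1, hi2, rfl⟩; exact hxfresh i hi1 hi2 hv
    have hxval : ∀ i, 1 ≤ i → i ≤ n + m → w' (xv i) = w x := by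
      intro i hi1 hi2
      simp only [hw'def]; exact if_pos ⟨i, hi1, hi2, rfl⟩
    have hyval : ∀ i, 1 ≤ i → i ≤ n + m - 1 → w' (yv i) = !(w x) := by
      intro i hi1 hi2
      simp only [hw'def]
      rw [if_neg, if_pos ⟨i, hi1, hi2, rfl⟩]
      rintro ⟨j, hj1, hj2, hj⟩
      exact hxy j i hj1 hj2 hi1 hi2 hj
    refine ⟨w', ?_⟩
    intro c hc
    simp only [List.mem_append, List.mem_map, List.mem_range] at hc
    rcases hc with (((hc | hc) | hc) | ⟨i, hi, rfl⟩) | ⟨i, hi, rfl⟩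
    · -- O
      obtain ⟨l, hl, hev⟩ := hw c (by simp [hc])
      refine ⟨l, hl, ?_⟩
      rw [← vlit_eval_congr w w' l (hagree l.var ⟨c, by simp [hc], l, hl, rfl⟩).symm]
      exact hev
    · -- Ns mapped
      obtain ⟨⟨k, Nk⟩, henum, rfl⟩ := hc
      have henum : (Nk, k) ∈ Ns.zipIdx := by
        obtain ⟨⟨b1, b2⟩, hb, hsw⟩ := henum
        simp only [Prod.swap_prod_mk, Prod.mk.injEq] at hsw
        obtain ⟨rfl, rfl⟩ := hsw
        exact hb
      have hNk : Nk ∈ Ns := by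
        have := List.mem_zipIdx' henum
        exact this.2 ▸ List.getElem_mem this.1
      have hkn : k < n := hn ▸ (List.mem_zipIdx' henum).1
      cases hwx : w x with
      | false =>
        refine ⟨⟨xv (k + 1), false⟩, ?_, ?_⟩
        · exact List.mem_map.mpr ⟨⟨x, false⟩, (hNs Nk hNk).1, by simp⟩
        · rw [vlit_eval_neg, hxval (k + 1) (by omega) (by omega), hwx]
          rfl
      | true =>
        obtain ⟨l, hl, hev⟩ := hw Nk (by simp [hNk])
        have hlx : l ≠ (⟨x, false⟩ : VLit) := by
          rintro rfl; simp [VLit.eval, hwx] at hev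
        refine ⟨l, List.mem_map.mpr ⟨l, hl, by simp [hlx]⟩, ?_⟩
        rw [← vlit_eval_congr w w' l (hagree l.var ⟨Nk, by simp [hNk], l, hl, rfl⟩).symm]
        exact hev
    · -- Ps mapped
      obtain ⟨⟨j, Pj⟩, henum, rfl⟩ := hc
      have henum : (Pj, j) ∈ Ps.zipIdx := by
        obtain ⟨⟨b1, b2⟩, hb, hsw⟩ := henum
        simp only [Prod.swap_prod_mk, Prod.mk.injEq] at hsw
        obtain ⟨rfl, rfl⟩ := hsw
        exact hb
      have hPj : Pj ∈ Ps := by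
        have := List.mem_zipIdx' henum
        exact this.2 ▸ List.getElem_mem this.1
      have hjm : j < m := hm ▸ (List.mem_zipIdx' henum).1
      cases hwx : w x with
      | true =>
        refine ⟨⟨xv (n + j + 1), true⟩, ?_, ?_⟩
        · exact List.mem_map.mpr ⟨⟨x, true⟩, (hPs Pj hPj).1, by simp⟩
        · rw [vlit_eval_pos, hxval (n + j + 1) (by omega) (by omega), hwx]
      | false =>
        obtain ⟨l, hl, hev⟩ := hw Pj (by simp [hPj])
        have hlx : l ≠ (⟨x, true⟩ : VLit) := by
          rintro rfl; simp [VLit.eval, hwx] at hev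
        refine ⟨l, List.mem_map.mpr ⟨l, hl, by simp [hlx]⟩, ?_⟩
        rw [← vlit_eval_congr w w' l (hagree l.var ⟨Pj, by simp [hPj], l, hl, rfl⟩).symm]
        exact hev
    · -- chain clause 1
      cases hwx : w x with
      | true =>
        refine ⟨⟨xv (i + 1), true⟩, by simp, ?_⟩
        rw [vlit_eval_pos, hxval (i + 1) (by omega) (by omega), hwx]
      | false =>
        refine ⟨⟨yv (i + 1), true⟩, by simp, ?_⟩
        rw [vlit_eval_pos, hyval (i + 1) (by omega) (by omega), hwx]
        rfl
    · -- chain clause 2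
      cases hwx : w x with
      | true =>
        refine ⟨⟨yv (i + 1), false⟩, by simp, ?_⟩
        rw [vlit_eval_neg, hyval (i + 1) (by omega) (by omega), hwx]
        rfl
      | false =>
        refine ⟨⟨xv (i + 2), false⟩, by simp, ?_⟩
        rw [vlit_eval_neg, hxval (i + 2) (by omega) (by omega), hwx]
        rfl
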